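/- Let 𝔤 = 𝔤^{−1}_{4.8} be the 4-dimensional real Lie algebra with basis e₁,...,e₄ and nonzero brackets [e₂,e₃] = e₁, [e₂,e₄] = e₂, [e₃,e₄] = −e₃. A 4×4 real matrix R equals η·Id + D for some η ∈ ℝ and some derivation D of 𝔤 if and only if R₂₁ = R₃₁ = R₄₁ = 0, R₃₂ = R₂₃ = R₄₂ = R₄₃ = 0, R₂₄ = R₁₃, R₃₄ = R₁₂, and R₄₄ = R₂₂ + R₃₃ − R₁₁. In this case η = R₄₄. -/
import Mathlib

open Matrix

/-- The Lie bracket of the Lie algebra, in coordinates. -/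
def br (x y : Fin 4 → ℝ) : Fin 4 → ℝ :=
  ![(x 1 * y 2 - x 2 * y 1), (x 1 * y 3 - x 3 * y 1), -(x 2 * y 3 - x 3 * y 2), (0:ℝ)]

/-- `D` (acting via `mulVec`) is a derivation of the bracket. -/
def IsDer (D : Matrix (Fin 4) (Fin 4) ℝ) : Prop :=
  ∀ x y : Fin 4 → ℝ, D.mulVec (br x y) = br (D.mulVec x) y + br x (D.mulVec y)

lemma isDer_iff (D : Matrix (Fin 4) (Fin 4) ℝ) :
    IsDer D ↔ (D 1 0 = 0 ∧ D 1 2 = 0 ∧ D 2 0 = 0 ∧ D 2 1 = 0 ∧ D 3 0 = 0 ∧ D 3 1 = 0 ∧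
      D 3 2 = 0 ∧ D 3 3 = 0 ∧ D 0 0 = D 1 1 + D 2 2 ∧ D 0 1 = D 2 3 ∧ D 0 2 = D 1 3) := by
  constructor
  · intro h
    have h01 := h ![1,0,0,0] ![0,1,0,0]
    have h02 := h ![1,0,0,0] ![0,0,1,0]
    have h12 := h ![0,1,0,0] ![0,0,1,0]
    have h13 := h ![0,1,0,0] ![0,0,0,1]
    have h23 := h ![0,0,1,0] ![0,0,0,1]
    have e01_0 := congrFun h01 0
    have e01_1 := congrFun h01 1
    have e02_0 := congrFun h02 0
    have e02_2 := congrFun h02 2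
    have e12_0 := congrFun h12 0
    have e12_1 := congrFun h12 1
    have e12_2 := congrFun h12 2
    have e12_3 := congrFun h12 3
    have e13_0 := congrFun h13 0
    have e13_1 := congrFun h13 1
    have e13_2 := congrFun h13 2
    have e13_3 := congrFun h13 3
    have e23_0 := congrFun h23 0
    have e23_1 := congrFun h23 1
    have e23_3 := congrFun h23 3
    simp [mulVec, br, Fin.sum_univ_four, dotProduct] at e01_0 e01_1 e02_0 e02_2 e12_0 e12_1 e12_2 e12_3 e13_0 e13_1 e13_2 e13_3 e23_0 e23_1 e23_3
    refine ⟨?_,?_,?_,?_,?_,?_,?_,?_,?_,?_,?_⟩ <;> linarith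
  · rintro ⟨h10, h12, h20, h21, h30, h31, h32, h33, h00, h01, h02⟩ x y
    funext i
    fin_cases i <;>
      simp [mulVec, br, Fin.sum_univ_four, dotProduct, h10, h12, h20, h21, h30, h31, h32, h33, h00, h01, h02] <;>
      ring

theorem stmt_18 (R : Matrix (Fin 4) (Fin 4) ℝ) :
    ((∃ (η : ℝ) (D : Matrix (Fin 4) (Fin 4) ℝ), IsDer D ∧
        R = η • (1 : Matrix (Fin 4) (Fin 4) ℝ) + D) ↔
      (R 1 0 = 0 ∧ R 2 0 = 0 ∧ R 3 0 = 0 ∧ R 2 1 = 0 ∧ R 1 2 = 0 ∧ R 3 1 = 0 ∧ R 3 2 = 0 ∧ R 1 3 = R 0 2 ∧ R 2 3 = R 0 1 ∧ R 3 3 = R 1 1 + R 2 2 - R 0 0)) ∧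
    (∀ (η : ℝ) (D : Matrix (Fin 4) (Fin 4) ℝ), IsDer D →
      R = η • (1 : Matrix (Fin 4) (Fin 4) ℝ) + D → η = R 3 3) := by
  constructor
  · constructor
    · rintro ⟨η, D, hD, rfl⟩
      rw [isDer_iff] at hD
      obtain ⟨h10, h12, h20, h21, h30, h31, h32, h33, h00, h01, h02⟩ := hD
      refine ⟨?_,?_,?_,?_,?_,?_,?_,?_,?_,?_⟩ <;>
        simp [Matrix.add_apply, Matrix.smul_apply, Matrix.one_apply, h10, h12, h20, h21, h30, h31, h32, h33, h00, h01, h02] <;>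
        ring
    · rintro ⟨h10, h20, h30, h21, h12, h31, h32, h13, h23, h33⟩
      refine ⟨R 3 3, R - (R 3 3) • 1, ?_, by abel⟩
      rw [isDer_iff]
      refine ⟨?_,?_,?_,?_,?_,?_,?_,?_,?_,?_,?_⟩ <;>
        simp [Matrix.sub_apply, Matrix.smul_apply, Matrix.one_apply, h10, h12, h20, h21, h30, h31, h32, h33, h13, h23] <;>
        ring
  · intro η D hD hR
    rw [isDer_iff] at hD
    have := congrFun (congrFun hR 3) 3
    simp [Matrix.add_apply, Matrix.smul_apply, Matrix.one_apply, hD.2.2.2.2.2.2.2.1] at this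
    linarith
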